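/- (Henze representation, univariate case) Let V be a standard half-normal random variable (V = |W| with W ~ N(0,1)) and X ~ N(0,1) independent of V. For δ ∈ (−1,1), the random variable Z = δV + √(1−δ²)·X has the skew-normal density 2φ(z)Φ(λz) with λ = δ/√(1−δ²). -/

import Mathlib

open MeasureTheory Real

/-- standard normal density -/
noncomputable def stdNormalPDF (x : ℝ) : ℝ :=
  (Real.sqrt (2 * Real.pi))⁻¹ * Real.exp (-x ^ 2 / 2)

/-- standard normal CDF -/
noncomputable def stdNormalCDF (x : ℝ) : ℝ :=
  ∫ t in Set.Iic x, stdNormalPDF t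

/-- normal density with mean μ and variance σ² -/
noncomputable def normalPDF (μ σ x : ℝ) : ℝ :=
  (σ * Real.sqrt (2 * Real.pi))⁻¹ * Real.exp (-(x - μ) ^ 2 / (2 * σ ^ 2))

/-- univariate skew-normal density -/
noncomputable def skewNormalPDF (μ σ l x : ℝ) : ℝ :=
  2 * normalPDF μ σ x * stdNormalCDF (l * (x - μ) / σ)

/-- half-normal density: 2φ(v) for v ≥ 0, else 0 -/
noncomputable def halfNormalPDF (v : ℝ) : ℝ :=
  if 0 ≤ v then 2 * stdNormalPDF v else 0

open Set



lemma stdNormalPDF_nonneg (x : ℝ) : 0 ≤ stdNormalPDF x := by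
  unfold stdNormalPDF
  positivity

lemma continuous_stdNormalPDF : Continuous stdNormalPDF := by
  unfold stdNormalPDF
  continuity

lemma integrable_stdNormalPDF : Integrable stdNormalPDF := by
  have h := integrable_exp_neg_mul_sq (b := (2:ℝ)⁻¹) (by norm_num)
  have := h.const_mul (Real.sqrt (2 * Real.pi))⁻¹
  refine this.congr ?_
  filter_upwards with x
  unfold stdNormalPDF
  ring_nf

lemma integral_stdNormalPDF : ∫ x, stdNormalPDF x = 1 := by
  unfold stdNormalPDF
  rw [MeasureTheory.integral_const_mul]
  have : ∀ x : ℝ, Real.exp (-x ^ 2 / 2) = Real.exp (-(2:ℝ)⁻¹ * x ^ 2) := by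
    intro x; ring_nf
  simp_rw [this, integral_gaussian]
  rw [← Real.sqrt_inv, ← Real.sqrt_mul (by positivity)]
  rw [show (2*Real.pi)⁻¹ * (Real.pi / 2⁻¹) = 1 by field_simp [Real.pi_ne_zero]]
  exact Real.sqrt_one

lemma stdNormal_tail (c : ℝ) : ∫ t in Set.Ioi c, stdNormalPDF t = stdNormalCDF (-c) := by
  have h := integral_comp_neg_Iic (-c) stdNormalPDF
  rw [neg_neg] at h
  rw [← h]
  unfold stdNormalCDF
  refine setIntegral_congr_fun measurableSet_Iic fun x _ => ?_
  unfold stdNormalPDF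
  rw [neg_pow]
  norm_num

lemma measurable_stdNormalCDF : Measurable stdNormalCDF := by
  have : Monotone stdNormalCDF := by
    intro a b hab
    unfold stdNormalCDF
    exact setIntegral_mono_set integrable_stdNormalPDF.integrableOn
      (Filter.Eventually.of_forall fun x => stdNormalPDF_nonneg x)
      (HasSubset.Subset.eventuallyLE (Iic_subset_Iic.mpr hab))
  exact this.measurable

lemma stdNormal_sub_integral (c : ℝ) (s : ℝ) (hs : 0 < s) :
    ∫ v in Set.Ioi (0:ℝ), stdNormalPDF ((v - c) / s) = s * stdNormalCDF (c / s) := by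
  have h1 : ∀ v : ℝ, (v - c) / s = v * s⁻¹ + (-(c / s)) := by
    intro v; field_simp; ring
  simp_rw [h1]
  rw [integral_comp_mul_right_Ioi (fun t => stdNormalPDF (t + (-(c / s)))) 0 (inv_pos.mpr hs)]
  have h2 : (∫ t in Set.Ioi ((0:ℝ) * s⁻¹), stdNormalPDF (t + (-(c / s))))
      = ∫ u in Set.Ioi (-(c/s)), stdNormalPDF u := by
    rw [zero_mul]
    have hmp : MeasurePreserving (fun t : ℝ => t + (-(c / s))) volume volume :=
      measurePreserving_add_right volume _
    have hemb : MeasurableEmbedding (fun t : ℝ => t + (-(c / s))) :=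
      (MeasurableEquiv.addRight (-(c / s))).measurableEmbedding
    have := hmp.setIntegral_preimage_emb hemb stdNormalPDF (Set.Ioi (-(c/s)))
    rw [← this]
    congr 1
    ext t
    simp
  rw [h2, stdNormal_tail, neg_neg, smul_eq_mul, inv_inv]

lemma key_exp_identity (δ z v s : ℝ) (hs : 0 < s) (hs2 : s ^ 2 = 1 - δ ^ 2) :
    stdNormalPDF v * stdNormalPDF ((z - δ * v) / s)
      = stdNormalPDF z * stdNormalPDF ((v - δ * z) / s) := by
  unfold stdNormalPDF
  rw [mul_mul_mul_comm, ← Real.exp_add, mul_mul_mul_comm, ← Real.exp_add]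
  congr 1
  have hsne : s ≠ 0 := hs.ne'
  field_simp
  congr 1; rw [hs2]; ring

lemma halfNormalPDF_nonneg (v : ℝ) : 0 ≤ halfNormalPDF v := by
  unfold halfNormalPDF
  split
  · have := stdNormalPDF_nonneg v
    linarith
  · exact le_refl 0

lemma integrand_eq (δ s z : ℝ) (hs : 0 < s) (hs2 : s ^ 2 = 1 - δ ^ 2) :
    (fun v => halfNormalPDF v * (stdNormalPDF ((z - δ * v) / s) * s⁻¹))
      = (Set.Ici (0:ℝ)).indicator
          (fun v => (2 * s⁻¹ * stdNormalPDF z) * stdNormalPDF ((v - δ * z) / s)) := by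
  funext v
  rw [Set.indicator_apply]
  unfold halfNormalPDF
  by_cases hv : (0:ℝ) ≤ v
  · simp only [hv, if_true, Set.mem_Ici]
    have := key_exp_identity δ z v s hs hs2
    linear_combination (2 * s⁻¹) * this
  · simp [hv]

lemma integrable_inner (δ s z : ℝ) (hs : 0 < s) :
    Integrable (fun v => (2 * s⁻¹ * stdNormalPDF z) * stdNormalPDF ((v - δ * z) / s)) := by
  have hb : (0:ℝ) < 1 / (2 * s ^ 2) := by positivity
  have h1 := (integrable_exp_neg_mul_sq hb).comp_sub_right (δ * z)
  have h2 := (h1.const_mul ((2 * s⁻¹ * stdNormalPDF z) * (Real.sqrt (2 * Real.pi))⁻¹))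
  refine h2.congr ?_
  filter_upwards with v
  unfold stdNormalPDF
  rw [show (-((v - δ * z) / s) ^ 2 / 2 : ℝ) = -(1 / (2 * s ^ 2)) * (v - δ * z) ^ 2 from by ring]
  ring

lemma density_integral (δ s z : ℝ) (hs : 0 < s) (hs2 : s ^ 2 = 1 - δ ^ 2) :
    ∫ v, halfNormalPDF v * (stdNormalPDF ((z - δ * v) / s) * s⁻¹)
      = skewNormalPDF 0 1 (δ / s) z := by
  rw [integrand_eq δ s z hs hs2, MeasureTheory.integral_indicator measurableSet_Ici,
    integral_Ici_eq_integral_Ioi, MeasureTheory.integral_const_mul,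
    stdNormal_sub_integral (δ * z) s hs]
  unfold skewNormalPDF normalPDF stdNormalPDF
  have hsne : s ≠ 0 := hs.ne'
  rw [show δ / s * (z - 0) / 1 = δ * z / s by rw [sub_zero, div_one, div_mul_eq_mul_div]]
  field_simp
  ring

lemma integrable_full (δ s z : ℝ) (hs : 0 < s) (hs2 : s ^ 2 = 1 - δ ^ 2) :
    Integrable (fun v => halfNormalPDF v * (stdNormalPDF ((z - δ * v) / s) * s⁻¹)) := by
  rw [integrand_eq δ s z hs hs2]
  exact (integrable_inner δ s z hs).indicator measurableSet_Ici

lemma measurable_halfNormalPDF : Measurable halfNormalPDF := by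
  unfold halfNormalPDF
  exact Measurable.ite measurableSet_Ici
    ((continuous_stdNormalPDF.measurable).const_mul 2) measurable_const

lemma density_lintegral (δ s z : ℝ) (hs : 0 < s) (hs2 : s ^ 2 = 1 - δ ^ 2) :
    ∫⁻ v, ENNReal.ofReal (halfNormalPDF v * (stdNormalPDF ((z - δ * v) / s) * s⁻¹))
      = ENNReal.ofReal (skewNormalPDF 0 1 (δ / s) z) := by
  rw [← ofReal_integral_eq_lintegral_ofReal (integrable_full δ s z hs hs2)
    (Filter.Eventually.of_forall fun v => by
      have h1 := halfNormalPDF_nonneg v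
      have h2 := stdNormalPDF_nonneg ((z - δ * v) / s)
      have h3 : (0:ℝ) ≤ s⁻¹ := le_of_lt (inv_pos.mpr hs)
      positivity), density_integral δ s z hs hs2]

lemma lintegral_affine_sub {h : ℝ → ENNReal} (hh : Measurable h) (a s : ℝ) (hs : 0 < s) :
    ∫⁻ x, h (a + s * x) = ENNReal.ofReal s⁻¹ * ∫⁻ u, h u := by
  have hmap : Measure.map (fun x : ℝ => a + s * x) volume
      = ENNReal.ofReal s⁻¹ • (volume : Measure ℝ) := by
    have hc : (fun x : ℝ => a + s * x) = (fun y : ℝ => a + y) ∘ (fun x : ℝ => s * x) := rfl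
    rw [hc, ← Measure.map_map (measurable_const_add a) (measurable_const_mul s),
      Real.map_volume_mul_left hs.ne', Measure.map_smul,
      map_add_left_eq_self volume a, abs_of_pos (inv_pos.mpr hs)]
  calc ∫⁻ x, h (a + s * x)
      = ∫⁻ u, h u ∂(Measure.map (fun x : ℝ => a + s * x) volume) := by
        rw [lintegral_map hh (by fun_prop)]
    _ = ENNReal.ofReal s⁻¹ * ∫⁻ u, h u := by rw [hmap, lintegral_smul_measure, smul_eq_mul]

lemma measurable_skew (l : ℝ) : Measurable (fun z => ENNReal.ofReal (skewNormalPDF 0 1 l z)) := by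
  unfold skewNormalPDF normalPDF
  apply Measurable.ennreal_ofReal
  apply Measurable.mul
  · fun_prop
  · exact measurable_stdNormalCDF.comp (by fun_prop)

/-- Henze representation: if V is half-normal, X standard normal,
independent, and δ ∈ (−1,1), then Z = δV + √(1−δ²)X has skew-normal density with
λ = δ/√(1−δ²). -/
theorem henze_representation {Ω : Type*} [MeasureSpace Ω]
    [IsProbabilityMeasure (volume : Measure Ω)]
    (V X : Ω → ℝ) (hV : Measurable V) (hX : Measurable X)
    (hInd : ProbabilityTheory.IndepFun V X (volume : Measure Ω))
    (hVlaw : Measure.map V (volume : Measure Ω) =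
      volume.withDensity (fun v => ENNReal.ofReal (halfNormalPDF v)))
    (hXlaw : Measure.map X (volume : Measure Ω) =
      volume.withDensity (fun x => ENNReal.ofReal (stdNormalPDF x)))
    (δ : ℝ) (hδ : δ ∈ Set.Ioo (-1 : ℝ) 1) :
    Measure.map (fun ω => δ * V ω + Real.sqrt (1 - δ ^ 2) * X ω) (volume : Measure Ω) =
      volume.withDensity
        (fun z => ENNReal.ofReal (skewNormalPDF 0 1 (δ / Real.sqrt (1 - δ ^ 2)) z)) := by
  classical
  obtain ⟨hδ1, hδ2⟩ := hδ
  set s : ℝ := Real.sqrt (1 - δ ^ 2) with hs_def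
  have h1δ : (0:ℝ) < 1 - δ ^ 2 := by nlinarith
  have hs : 0 < s := Real.sqrt_pos.mpr h1δ
  have hs2 : s ^ 2 = 1 - δ ^ 2 := Real.sq_sqrt h1δ.le
  -- measurability of densities
  have mfV : Measurable fun v : ℝ => ENNReal.ofReal (halfNormalPDF v) :=
    measurable_halfNormalPDF.ennreal_ofReal
  have mfX : Measurable fun x : ℝ => ENNReal.ofReal (stdNormalPDF x) :=
    continuous_stdNormalPDF.measurable.ennreal_ofReal
  -- joint law
  have hpair : Measure.map (fun ω => (V ω, X ω)) (volume : Measure Ω)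
      = (Measure.map V volume).prod (Measure.map X volume) :=
    (ProbabilityTheory.indepFun_iff_map_prod_eq_prod_map_map hV.aemeasurable
      hX.aemeasurable).mp hInd
  have hg : Measurable (fun p : ℝ × ℝ => δ * p.1 + s * p.2) := by fun_prop
  have hcomp : (fun ω => δ * V ω + s * X ω)
      = (fun p : ℝ × ℝ => δ * p.1 + s * p.2) ∘ (fun ω => (V ω, X ω)) := rfl
  rw [hcomp, ← Measure.map_map hg (hV.prodMk hX), hpair, hVlaw, hXlaw]
  ext A hA
  rw [Measure.map_apply hg hA, Measure.prod_apply (hg hA), withDensity_apply _ hA]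
  -- inner slice computation
  have slice : ∀ v : ℝ,
      (volume.withDensity fun x => ENNReal.ofReal (stdNormalPDF x))
        (Prod.mk v ⁻¹' ((fun p : ℝ × ℝ => δ * p.1 + s * p.2) ⁻¹' A))
      = ENNReal.ofReal s⁻¹
          * ∫⁻ u in A, ENNReal.ofReal (stdNormalPDF ((u - δ * v) / s)) := by
    intro v
    have hpre : Prod.mk v ⁻¹' ((fun p : ℝ × ℝ => δ * p.1 + s * p.2) ⁻¹' A)
        = (fun x : ℝ => δ * v + s * x) ⁻¹' A := rfl
    have hpreM : MeasurableSet ((fun x : ℝ => δ * v + s * x) ⁻¹' A) :=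
      (by fun_prop : Measurable fun x : ℝ => δ * v + s * x) hA
    rw [hpre, withDensity_apply _ hpreM, ← lintegral_indicator hpreM]
    have hind : (fun x : ℝ =>
          ((fun x : ℝ => δ * v + s * x) ⁻¹' A).indicator
            (fun x => ENNReal.ofReal (stdNormalPDF x)) x)
        = fun x : ℝ =>
            (A.indicator fun u => ENNReal.ofReal (stdNormalPDF ((u - δ * v) / s)))
              (δ * v + s * x) := by
      funext x
      rw [Set.indicator_apply, Set.indicator_apply]
      have h1 : (δ * v + s * x - δ * v) / s = x := by field_simp; ring
      have h2 : s * x / s = x := by field_simp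
      by_cases hx : δ * v + s * x ∈ A <;> simp [hx, h1, h2]
    have hφm : Measurable fun u : ℝ => ENNReal.ofReal (stdNormalPDF ((u - δ * v) / s)) :=
      ((continuous_stdNormalPDF.comp (by continuity)).measurable).ennreal_ofReal
    rw [hind, lintegral_affine_sub (hφm.indicator hA) (δ * v) s hs, lintegral_indicator hA _]
  simp_rw [slice]
  -- push fV inside
  have hFmeas : Measurable fun p : ℝ × ℝ =>
      ENNReal.ofReal (halfNormalPDF p.1) * ENNReal.ofReal s⁻¹
        * ENNReal.ofReal (stdNormalPDF ((p.2 - δ * p.1) / s)) := by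
    refine Measurable.mul (f := fun p : ℝ × ℝ => ENNReal.ofReal (halfNormalPDF p.1) * ENNReal.ofReal s⁻¹) (g := fun p : ℝ × ℝ => ENNReal.ofReal (stdNormalPDF ((p.2 - δ * p.1) / s))) ?_ ?_
    · exact (measurable_halfNormalPDF.comp measurable_fst).ennreal_ofReal.mul measurable_const
    · exact (continuous_stdNormalPDF.measurable.comp (by fun_prop)).ennreal_ofReal
  have hinner_meas : Measurable fun v : ℝ =>
      ENNReal.ofReal s⁻¹ * ∫⁻ u in A, ENNReal.ofReal (stdNormalPDF ((u - δ * v) / s)) := by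
    apply Measurable.const_mul
    exact Measurable.lintegral_prod_right
      ((continuous_stdNormalPDF.measurable.comp (by fun_prop)).ennreal_ofReal)
  rw [lintegral_withDensity_eq_lintegral_mul volume mfV hinner_meas]
  have step : ∀ v : ℝ,
      (ENNReal.ofReal (halfNormalPDF v)
        * (ENNReal.ofReal s⁻¹ * ∫⁻ u in A, ENNReal.ofReal (stdNormalPDF ((u - δ * v) / s))))
      = ∫⁻ u in A, ENNReal.ofReal (halfNormalPDF v) * ENNReal.ofReal s⁻¹
          * ENNReal.ofReal (stdNormalPDF ((u - δ * v) / s)) := by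
    intro v
    have hφm : Measurable fun u : ℝ => ENNReal.ofReal (stdNormalPDF ((u - δ * v) / s)) :=
      ((continuous_stdNormalPDF.comp (by continuity)).measurable).ennreal_ofReal
    rw [← mul_assoc,
      ← lintegral_const_mul (ENNReal.ofReal (halfNormalPDF v) * ENNReal.ofReal s⁻¹) hφm]
  simp_rw [Pi.mul_apply, step]
  rw [lintegral_lintegral_swap (hFmeas.aemeasurable)]
  refine lintegral_congr fun u => ?_
  have : ∀ v : ℝ, ENNReal.ofReal (halfNormalPDF v) * ENNReal.ofReal s⁻¹
      * ENNReal.ofReal (stdNormalPDF ((u - δ * v) / s))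
      = ENNReal.ofReal (halfNormalPDF v * (stdNormalPDF ((u - δ * v) / s) * s⁻¹)) := by
    intro v
    rw [← ENNReal.ofReal_mul (halfNormalPDF_nonneg v),
      ← ENNReal.ofReal_mul (mul_nonneg (halfNormalPDF_nonneg v) (inv_pos.mpr hs).le)]
    ring_nf
  simp_rw [this]
  exact density_lintegral δ s u hs hs2
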